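/- arXiv:2205.11119 — 3 statements merged into one kernel-verified Lean document; each statement's English description precedes it below -/
import Mathlib

section
/- Let A_1 ∈ ℝ^{p×d_1}, …, A_n ∈ ℝ^{p×d_n} be matrices such that the horizontally concatenated matrix A = [A_1, …, A_n] ∈ ℝ^{p×d} (with d = d_1 + ⋯ + d_n) has full row rank. Let 𝒜 = diag(A_1, …, A_n) ∈ ℝ^{np×d} be the block diagonal matrix with blocks A_1, …, A_n. Let M ∈ ℝ^{n×n} be a symmetric doubly stochastic matrix, let H ∈ ℝ^{n×n} be a symmetric positive semi-definite matrix whose null space equals the span of the all-ones vector 1_n, and let c > 0 be a constant. Then the matrix (M ⊗ I_p) 𝒜 𝒜ᵀ (M ⊗ I_p) + c (H ⊗ I_p) is positive definite. -/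
open Matrix Finset
open scoped Kronecker RealInnerProductSpace

noncomputable section

/-- Eigenvalues of a real symmetric matrix, sorted in ascending order. -/
def eigsAsc {n : ℕ} (A : Matrix (Fin n) (Fin n) ℝ) : Fin n → ℝ :=
  if h : A.IsHermitian then h.eigenvalues ∘ Tuple.sort h.eigenvalues else 0

/-- Singular values (ascending): square roots of eigenvalues of `BᵀB`. -/
def svals {m n : ℕ} (B : Matrix (Fin m) (Fin n) ℝ) : Fin n → ℝ :=
  fun i => Real.sqrt (eigsAsc (Bᵀ * B) i)

/-- The (unsorted) eigenvalues of a symmetric matrix. -/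
def eigsOf {ι : Type*} [Fintype ι] [DecidableEq ι] (A : Matrix ι ι ℝ) : ι → ℝ :=
  if h : A.IsHermitian then h.eigenvalues else 0

/-- Largest singular value. -/
def smax {κ ι : Type*} [Fintype κ] [Fintype ι] [DecidableEq ι] (B : Matrix κ ι ℝ) : ℝ :=
  ⨆ i, Real.sqrt (eigsOf (Bᵀ * B) i)

/-- Smallest nonzero singular value. -/
def sminPos {κ ι : Type*} [Fintype κ] [Fintype ι] [DecidableEq ι] (B : Matrix κ ι ℝ) : ℝ :=
  sInf {x : ℝ | 0 < x ∧ ∃ i, Real.sqrt (eigsOf (Bᵀ * B) i) = x}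

/-- Smallest eigenvalue of a symmetric matrix. -/
def lmin {ι : Type*} [Fintype ι] [DecidableEq ι] (A : Matrix ι ι ℝ) : ℝ :=
  if h : A.IsHermitian then ⨅ i, h.eigenvalues i else 0

def DoublyStochastic {n : ℕ} (M : Matrix (Fin n) (Fin n) ℝ) : Prop :=
  (∀ i j, 0 ≤ M i j) ∧ (∀ i, ∑ j, M i j = 1) ∧ (∀ j, ∑ i, M i j = 1)

/-- The null space of `B` is the span of the all-ones vector. -/
def NullSpanOnes {n : ℕ} (B : Matrix (Fin n) (Fin n) ℝ) : Prop :=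
  ∀ x : Fin n → ℝ, B.mulVec x = 0 ↔ ∃ c : ℝ, x = fun _ => c

/-- Horizontal concatenation `[A_1, …, A_n]`. -/
def hcat {n p : ℕ} {d : Fin n → ℕ} (A : ∀ i, Matrix (Fin p) (Fin (d i)) ℝ) :
    Matrix (Fin p) ((i : Fin n) × Fin (d i)) ℝ :=
  Matrix.of fun q jr => A jr.1 q jr.2

/-- Block diagonal matrix `diag(A_1, …, A_n)`. -/
def bdiag {n p : ℕ} {d : Fin n → ℕ} (A : ∀ i, Matrix (Fin p) (Fin (d i)) ℝ) :
    Matrix (Fin n × Fin p) ((i : Fin n) × Fin (d i)) ℝ :=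
  Matrix.of fun iq jr => if iq.1 = jr.1 then A jr.1 iq.2 jr.2 else 0

/-- Matrix–vector product, as a map of Euclidean spaces. -/
def mvec {κ ι : Type*} [Fintype ι] [Fintype κ] (M : Matrix κ ι ℝ)
    (x : EuclideanSpace ℝ ι) : EuclideanSpace ℝ κ := WithLp.toLp 2 (M.mulVec x)

/-- Weighted squared seminorm `‖z‖²_P = zᵀ P z`. -/
def wnormSq {ι : Type*} [Fintype ι] (P : Matrix ι ι ℝ) (z : EuclideanSpace ℝ ι) : ℝ :=
  ⟪z, mvec P z⟫

/-- `s` is a subgradient of `φ` at `x`. -/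
def IsSubgrad {ι : Type*} [Fintype ι] (φ : EuclideanSpace ℝ ι → EReal)
    (x s : EuclideanSpace ℝ ι) : Prop :=
  ∀ y, φ x + ((⟪s, y - x⟫ : ℝ) : EReal) ≤ φ y

/-- `p = prox_{βφ}(u)`. -/
def IsProx {ι : Type*} [Fintype ι] (φ : EuclideanSpace ℝ ι → EReal) (β : ℝ)
    (u p : EuclideanSpace ℝ ι) : Prop :=
  ∀ y, φ p + (((2*β)⁻¹ * ‖p - u‖^2 : ℝ) : EReal) ≤ φ y + (((2*β)⁻¹ * ‖y - u‖^2 : ℝ) : EReal)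

/-- Convex conjugate. -/
def econj {ι : Type*} [Fintype ι] (h : EuclideanSpace ℝ ι → EReal)
    (l : EuclideanSpace ℝ ι) : EReal :=
  ⨆ y, ((⟪l, y⟫ : ℝ) : EReal) - h y

/-- Proper, closed (lower semicontinuous) and convex extended-real-valued function. -/
def ProperClosedConvex {ι : Type*} [Fintype ι] (φ : EuclideanSpace ℝ ι → EReal) : Prop :=
  (∀ x, φ x ≠ ⊥) ∧ (∃ x, φ x ≠ ⊤) ∧ LowerSemicontinuous φ ∧
    ∀ x y : EuclideanSpace ℝ ι, ∀ a b : ℝ, 0 ≤ a → 0 ≤ b → a + b = 1 →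
      φ (a • x + b • y) ≤ (a : EReal) * φ x + (b : EReal) * φ y

/-- Replicate a vector `n` times: `1_n ⊗ λ`. -/
def repBlock {n p : ℕ} (lam : EuclideanSpace ℝ (Fin p)) :
    EuclideanSpace ℝ (Fin n × Fin p) := WithLp.toLp 2 (fun iq : Fin n × Fin p => lam iq.2)

/-- Extract the `i`-th block of a stacked vector. -/
def blk {n p : ℕ} (z : EuclideanSpace ℝ (Fin n × Fin p)) (i : Fin n) :
    EuclideanSpace ℝ (Fin p) := WithLp.toLp 2 (fun q => z (i, q))

/-- `h̄(ℓ) = (1/n) Σᵢ h*(λᵢ)`. -/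
def hbar {n p : ℕ} (hs : EuclideanSpace ℝ (Fin p) → EReal)
    (z : EuclideanSpace ℝ (Fin n × Fin p)) : EReal :=
  (((n : ℝ)⁻¹ : ℝ) : EReal) * ∑ i : Fin n, hs (blk z i)


/-- Kronecker product with the `p × p` identity: `B ⊗ I_p`. -/
def KI {n : ℕ} (p : ℕ) (B : Matrix (Fin n) (Fin n) ℝ) :
    Matrix (Fin n × Fin p) (Fin n × Fin p) ℝ :=
  B ⊗ₖ (1 : Matrix (Fin p) (Fin p) ℝ)


lemma KI_apply' {n p : ℕ} (B : Matrix (Fin n) (Fin n) ℝ) (i j : Fin n) (q r : Fin p) :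
    KI p B (i,q) (j,r) = B i j * (if q = r then 1 else 0) := by
  simp [KI, Matrix.one_apply]

lemma KI_mulVec' {n p : ℕ} (B : Matrix (Fin n) (Fin n) ℝ) (x : Fin n × Fin p → ℝ)
    (i : Fin n) (q : Fin p) :
    (KI p B *ᵥ x) (i,q) = ∑ j, B i j * x (j,q) := by
  simp only [Matrix.mulVec, dotProduct, Fintype.sum_prod_type, KI_apply']
  simp [mul_ite, ite_mul, mul_comm]

lemma KI_transpose' {n p : ℕ} (B : Matrix (Fin n) (Fin n) ℝ) (hB : B.IsSymm) :
    (KI p B)ᵀ = KI p B := by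
  ext ⟨i,q⟩ ⟨j,r⟩
  have h := congrFun (congrFun hB i) j
  simp only [Matrix.transpose_apply] at h ⊢
  rw [KI_apply', KI_apply', ← h]
  simp [eq_comm]

lemma dot_KI' {n p : ℕ} (H : Matrix (Fin n) (Fin n) ℝ) (x : Fin n × Fin p → ℝ) :
    x ⬝ᵥ (KI p H *ᵥ x) =
      ∑ q : Fin p, (fun j => x (j,q)) ⬝ᵥ (H *ᵥ fun j => x (j,q)) := by
  simp only [dotProduct, Fintype.sum_prod_type]
  rw [Finset.sum_comm]
  congr 1; ext q; congr 1; ext i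
  rw [KI_mulVec']
  simp [Matrix.mulVec, dotProduct]

/-- If `A = [A_1, …, A_n]` has full row rank, `M` is symmetric doubly
stochastic, `H` is symmetric PSD with null space `span(1_n)` and `c > 0`, then
`(M ⊗ I_p) 𝒜 𝒜ᵀ (M ⊗ I_p) + c (H ⊗ I_p)` is positive definite, where
`𝒜 = diag(A_1, …, A_n)`. -/
theorem kron_blockDiag_posDef {n p : ℕ} {d : Fin n → ℕ}
    (A : ∀ i, Matrix (Fin p) (Fin (d i)) ℝ)
    (hA : (hcat A * (hcat A)ᵀ).PosDef)
    (M H : Matrix (Fin n) (Fin n) ℝ)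
    (hMsymm : M.IsSymm) (hM : DoublyStochastic M)
    (hHsymm : H.IsSymm) (hHpsd : H.PosSemidef) (hHnull : NullSpanOnes H)
    (c : ℝ) (hc : 0 < c) :
    (KI p M * bdiag A * (bdiag A)ᵀ * KI p M + c • KI p H).PosDef := by
  have hMT : (KI p M)ᵀ = KI p M := KI_transpose' M hMsymm
  have hHT : (KI p H)ᵀ = KI p H := KI_transpose' H hHsymm
  set B := (bdiag A)ᵀ * KI p M with hBdef
  have hrw : KI p M * bdiag A * (bdiag A)ᵀ * KI p M = Bᵀ * B := by
    rw [hBdef, Matrix.transpose_mul, hMT, Matrix.transpose_transpose]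
    simp [Matrix.mul_assoc]
  rw [hrw]
  rw [Matrix.posDef_iff_dotProduct_mulVec]
  constructor
  · refine (?_ : (Bᵀ * B).IsHermitian).add ?_
    · have := Matrix.isHermitian_conjTranspose_mul_self B
      rwa [Matrix.conjTranspose_eq_transpose_of_trivial] at this
    · show (c • KI p H)ᴴ = c • KI p H
      rw [Matrix.conjTranspose_eq_transpose_of_trivial, Matrix.transpose_smul, hHT]
  · intro x hx
    rw [star_trivial]
    have key : x ⬝ᵥ ((Bᵀ * B + c • KI p H) *ᵥ x)
        = (B *ᵥ x) ⬝ᵥ (B *ᵥ x) + c * (x ⬝ᵥ (KI p H *ᵥ x)) := by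
      rw [Matrix.add_mulVec, dotProduct_add, Matrix.smul_mulVec,
        dotProduct_smul, smul_eq_mul]
      congr 1
      rw [← Matrix.mulVec_mulVec, Matrix.dotProduct_mulVec, Matrix.vecMul_transpose]
    rw [key]
    have hterm1 : 0 ≤ (B *ᵥ x) ⬝ᵥ (B *ᵥ x) :=
      Finset.sum_nonneg fun i _ => mul_self_nonneg _
    have hqnn : ∀ q : Fin p, 0 ≤ (fun j => x (j,q)) ⬝ᵥ (H *ᵥ fun j => x (j,q)) := by
      intro q
      have := hHpsd.dotProduct_mulVec_nonneg (fun j => x (j,q))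
      rwa [star_trivial] at this
    have hterm2 : 0 ≤ x ⬝ᵥ (KI p H *ᵥ x) := by
      rw [dot_KI']
      exact Finset.sum_nonneg fun q _ => hqnn q
    rcases hterm2.eq_or_lt with h2 | h2
    · -- the H-part vanishes, so x is a replicated block vector
      have hq0 : ∀ q : Fin p, (fun j => x (j,q)) ⬝ᵥ (H *ᵥ fun j => x (j,q)) = 0 := by
        have hs : ∑ q : Fin p, (fun j => x (j,q)) ⬝ᵥ (H *ᵥ fun j => x (j,q)) = 0 := by
          rw [← dot_KI', ← h2]
        intro q
        have := (Finset.sum_eq_zero_iff_of_nonneg (fun q _ => hqnn q)).mp hs q (Finset.mem_univ q)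
        exact this
      have hHx : ∀ q : Fin p, H *ᵥ (fun j => x (j,q)) = 0 := by
        intro q
        refine (hHpsd.dotProduct_mulVec_zero_iff _).mp ?_
        rw [star_trivial]
        exact hq0 q
      choose lam hlam using fun q => (hHnull _).mp (hHx q)
      have hxval : ∀ (i : Fin n) (q : Fin p), x (i,q) = lam q :=
        fun i q => congrFun (hlam q) i
      have hlam0 : lam ≠ 0 := by
        intro h0
        apply hx
        ext ⟨i,q⟩
        rw [hxval i q, h0]
        rfl
      have hfix : KI p M *ᵥ x = x := by
        ext ⟨i,q⟩
        rw [KI_mulVec']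
        simp only [hxval]
        rw [← Finset.sum_mul, hM.2.1 i, one_mul]
      have hBx : B *ᵥ x = (hcat A)ᵀ *ᵥ lam := by
        rw [hBdef, ← Matrix.mulVec_mulVec, hfix]
        ext ⟨j,r⟩
        simp only [Matrix.mulVec, dotProduct, Matrix.transpose_apply,
          bdiag, hcat, Matrix.of_apply, Fintype.sum_prod_type]
        simp [hxval, ite_mul, Finset.sum_ite_eq']
      have hBxne : B *ᵥ x ≠ 0 := by
        rw [hBx]
        intro h0
        have hpos := hA.dotProduct_mulVec_pos hlam0
        rw [star_trivial, ← Matrix.mulVec_mulVec, Matrix.dotProduct_mulVec,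
          ← Matrix.mulVec_transpose, h0] at hpos
        simp at hpos
      have h1pos : 0 < (B *ᵥ x) ⬝ᵥ (B *ᵥ x) :=
        lt_of_le_of_ne hterm1 (fun h => hBxne (dotProduct_self_eq_zero.mp h.symm))
      rw [← h2]
      linarith
    · have := mul_pos hc h2
      linarith


end
end

section
/- Let f : ℝ^d → ℝ be μ-strongly convex and differentiable, let g : ℝ^d → ℝ ∪ {+∞} be proper closed convex, let h* : ℝ^p → ℝ ∪ {+∞} be proper closed convex, and let A ∈ ℝ^{p×d}. Suppose either (a) g = 0 and A has full row rank, or (b) h* is ν-strongly convex for some ν > 0. Then there is at most one pair (x*, λ*) ∈ ℝ^d × ℝ^p satisfying the optimality conditions 0 ∈ ∇f(x*) + Aᵀλ* + ∂g(x*) and Ax* ∈ ∂h*(λ*). -/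
open Matrix Finset
open scoped Kronecker RealInnerProductSpace

noncomputable section

lemma isSubgrad_mono {ι : Type*} [Fintype ι] {φ : EuclideanSpace ℝ ι → EReal}
    (hφ : ProperClosedConvex φ) {x y s t : EuclideanSpace ℝ ι}
    (hx : IsSubgrad φ x s) (hy : IsSubgrad φ y t) : 0 ≤ ⟪s - t, x - y⟫ := by
  obtain ⟨hbot, ⟨z, hz⟩, -, -⟩ := hφ
  have hxt : φ x ≠ ⊤ := by
    intro h
    have := hx z
    rw [h, EReal.top_add_coe] at this
    exact hz (top_le_iff.mp this)
  have hyt : φ y ≠ ⊤ := by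
    intro h
    have := hy z
    rw [h, EReal.top_add_coe] at this
    exact hz (top_le_iff.mp this)
  have hax : φ x = ((φ x).toReal : EReal) := (EReal.coe_toReal hxt (hbot x)).symm
  have hay : φ y = ((φ y).toReal : EReal) := (EReal.coe_toReal hyt (hbot y)).symm
  have h1 := hx y
  have h2 := hy x
  rw [hax, hay, ← EReal.coe_add, EReal.coe_le_coe_iff] at h1 h2
  have e1 : ⟪s, y - x⟫ = -⟪s, x - y⟫ := by rw [← inner_neg_right, neg_sub]
  have e3 : ⟪s - t, x - y⟫ = ⟪s, x - y⟫ - ⟪t, x - y⟫ := inner_sub_left _ _ _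
  linarith

lemma mvec_sub' {κ ι : Type*} [Fintype ι] [Fintype κ] (M : Matrix κ ι ℝ)
    (u v : EuclideanSpace ℝ ι) : mvec M (u - v) = mvec M u - mvec M v := by
  ext k
  simp [mvec, Matrix.mulVec, dotProduct, PiLp.sub_apply, mul_sub,
    Finset.sum_sub_distrib]

lemma mvec_adjoint' {p d : ℕ} (A : Matrix (Fin p) (Fin d) ℝ)
    (v : EuclideanSpace ℝ (Fin p)) (w : EuclideanSpace ℝ (Fin d)) :
    ⟪mvec Aᵀ v, w⟫ = ⟪v, mvec A w⟫ := by
  simp only [mvec, PiLp.inner_apply, PiLp.toLp_apply, RCLike.inner_apply, conj_trivial,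
    Matrix.mulVec, dotProduct, Matrix.transpose_apply, Finset.sum_mul,
    Finset.mul_sum]
  rw [Finset.sum_comm]
  apply Finset.sum_congr rfl
  intro i _
  apply Finset.sum_congr rfl
  intro j _
  ring

/-- Uniqueness of the pair `(x*, λ*)` satisfying the optimality conditions
`0 ∈ ∇f(x*) + Aᵀλ* + ∂g(x*)` and `Ax* ∈ ∂h*(λ*)`, under strong convexity of `f` and either
(a) `g = 0` and `A` of full row rank, or (b) `h*` strongly convex. -/
theorem saddle_point_unique {d p : ℕ} (μ : ℝ) (hμ : 0 < μ)
    (f : EuclideanSpace ℝ (Fin d) → ℝ)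
    (gf : EuclideanSpace ℝ (Fin d) → EuclideanSpace ℝ (Fin d))
    (hdiff : ∀ x, HasGradientAt f (gf x) x)
    (hsc : ∀ x y, μ * ‖x - y‖ ^ 2 ≤ ⟪gf x - gf y, x - y⟫)
    (g : EuclideanSpace ℝ (Fin d) → EReal) (hg : ProperClosedConvex g)
    (hs : EuclideanSpace ℝ (Fin p) → EReal) (hhs : ProperClosedConvex hs)
    (A : Matrix (Fin p) (Fin d) ℝ)
    (hcase : (g = (fun _ => (0 : EReal)) ∧ (A * Aᵀ).PosDef) ∨
      (∃ ν : ℝ, 0 < ν ∧ ∀ y y' s s', IsSubgrad hs y s → IsSubgrad hs y' s' →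
        ν * ‖y - y'‖ ^ 2 ≤ ⟪s - s', y - y'⟫)) :
    ∀ (x x' : EuclideanSpace ℝ (Fin d)) (lam lam' : EuclideanSpace ℝ (Fin p)),
      (∃ s, IsSubgrad g x s ∧ gf x + mvec Aᵀ lam + s = 0) →
      IsSubgrad hs lam (mvec A x) →
      (∃ s, IsSubgrad g x' s ∧ gf x' + mvec Aᵀ lam' + s = 0) →
      IsSubgrad hs lam' (mvec A x') →
      x = x' ∧ lam = lam' := by
  intro x x' lam lam' h1 h2 h3 h4
  obtain ⟨s, hgs, heq⟩ := h1
  obtain ⟨s', hgs', heq'⟩ := h3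
  have hg0 : 0 ≤ ⟪s - s', x - x'⟫ := isSubgrad_mono hg hgs hgs'
  have hh0 : 0 ≤ ⟪mvec A x - mvec A x', lam - lam'⟫ := isSubgrad_mono hhs h2 h4
  have hss : s - s' = (gf x' - gf x) + (mvec Aᵀ lam' - mvec Aᵀ lam) := by
    ext i
    have e1 := congrArg (fun v => v i) heq
    have e2 := congrArg (fun v => v i) heq'
    simp only [PiLp.add_apply, PiLp.sub_apply, PiLp.zero_apply] at e1 e2 ⊢
    linarith
  have hβ : ⟪mvec A x - mvec A x', lam - lam'⟫ = ⟪mvec Aᵀ (lam - lam'), x - x'⟫ := by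
    rw [mvec_adjoint', ← mvec_sub', real_inner_comm]
  have hexp : ⟪s - s', x - x'⟫
      = -⟪gf x - gf x', x - x'⟫ - ⟪mvec A x - mvec A x', lam - lam'⟫ := by
    rw [hss, inner_add_left, hβ]
    have e1 : (gf x' - gf x : EuclideanSpace ℝ (Fin d)) = -(gf x - gf x') := by
      rw [neg_sub]
    have e2 : (mvec Aᵀ lam' - mvec Aᵀ lam : EuclideanSpace ℝ (Fin d))
        = -(mvec Aᵀ (lam - lam')) := by rw [mvec_sub', neg_sub]
    rw [e1, e2, inner_neg_left, inner_neg_left]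
    ring
  have hα : μ * ‖x - x'‖ ^ 2 ≤ ⟪gf x - gf x', x - x'⟫ := hsc x x'
  have hαle : ⟪gf x - gf x', x - x'⟫ ≤ 0 := by rw [hexp] at hg0; linarith
  have hxx : x = x' := by
    have ht : μ * ‖x - x'‖ ^ 2 ≤ μ * 0 := by simpa using le_trans hα hαle
    have ht2 : ‖x - x'‖ ^ 2 ≤ 0 := le_of_mul_le_mul_left ht hμ
    have hn : ‖x - x'‖ = 0 := by nlinarith [norm_nonneg (x - x')]
    exact sub_eq_zero.mp (norm_eq_zero.mp hn)
  refine ⟨hxx, ?_⟩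
  have hAzero : mvec A x - mvec A x' = 0 := by rw [hxx]; simp
  rcases hcase with ⟨hg0eq, hpd⟩ | ⟨ν, hν, hmono⟩
  · -- case (a): g = 0 and A Aᵀ positive definite
    subst hg0eq
    have hs0 : s = 0 := by
      have h := hgs (x + s)
      simp only [zero_add] at h
      have h' : ⟪s, x + s - x⟫ ≤ (0 : ℝ) := by exact_mod_cast h
      rw [add_sub_cancel_left, real_inner_self_eq_norm_sq] at h'
      have : ‖s‖ = 0 := by nlinarith [norm_nonneg s]
      exact norm_eq_zero.mp this
    have hs0' : s' = 0 := by
      have h := hgs' (x' + s')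
      simp only [zero_add] at h
      have h' : ⟪s', x' + s' - x'⟫ ≤ (0 : ℝ) := by exact_mod_cast h
      rw [add_sub_cancel_left, real_inner_self_eq_norm_sq] at h'
      have : ‖s'‖ = 0 := by nlinarith [norm_nonneg s']
      exact norm_eq_zero.mp this
    have hkeq : mvec Aᵀ lam = mvec Aᵀ lam' := by
      ext i
      have e1 := congrArg (fun v => v i) heq
      have e2 := congrArg (fun v => v i) heq'
      have e3 := congrArg (fun v => v i) (congrArg gf hxx)
      have e4 := congrArg (fun v => v i) hs0
      have e5 := congrArg (fun v => v i) hs0'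
      simp only [PiLp.add_apply, PiLp.zero_apply] at e1 e2 e4 e5
      linarith
    have hker : mvec Aᵀ (lam - lam') = 0 := by
      rw [mvec_sub', hkeq, sub_self]
    by_contra hne
    have hv : lam - lam' ≠ 0 := sub_ne_zero.mpr hne
    have hpos := hpd.dotProduct_mulVec_pos (x := lam.ofLp - lam'.ofLp) (sub_ne_zero.mpr (fun h => hne (WithLp.ofLp_injective 2 h)))
    have hmv : (A * Aᵀ) *ᵥ (lam - lam') = 0 := by
      rw [← Matrix.mulVec_mulVec]
      have : Aᵀ *ᵥ (lam - lam') = (0 : Fin d → ℝ) := by simpa [mvec] using congrArg WithLp.ofLp hker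
      rw [this, Matrix.mulVec_zero]
    rw [hmv] at hpos
    simp at hpos
  · -- case (b): h* strongly convex
    have hb := hmono lam lam' (mvec A x) (mvec A x') h2 h4
    rw [hAzero] at hh0
    rw [real_inner_comm] at hb
    rw [hAzero] at hb
    simp only [inner_zero_right] at hb
    have ht : ν * ‖lam - lam'‖ ^ 2 ≤ ν * 0 := by simpa using hb
    have ht2 : ‖lam - lam'‖ ^ 2 ≤ 0 := le_of_mul_le_mul_left ht hν
    have hsq : ‖lam - lam'‖ ^ 2 = 0 := le_antisymm ht2 (sq_nonneg _)
    have hn : ‖lam - lam'‖ = 0 := by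
      exact pow_eq_zero_iff two_ne_zero |>.mp hsq
    exact sub_eq_zero.mp (norm_eq_zero.mp hn)

end
end

section
/- Let f : ℝ^d → ℝ be differentiable, μ-strongly convex, and l-smooth. Then for all u, x, y ∈ ℝ^d: ⟨u − y, ∇f(x) − ∇f(y)⟩ ≥ −(l − μ/2)‖u − x‖² + (μ/2)( ‖u − y‖² + ‖x − y‖² ). -/
open Matrix Finset
open scoped Kronecker RealInnerProductSpace

noncomputable section

/-- For `f` differentiable, `μ`-strongly convex and `l`-smooth,
`⟨u − y, ∇f(x) − ∇f(y)⟩ ≥ −(l − μ/2)‖u − x‖² + (μ/2)(‖u − y‖² + ‖x − y‖²)`. -/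
theorem inner_grad_lower_bound {d : ℕ} (μ l : ℝ)
    (f : EuclideanSpace ℝ (Fin d) → ℝ) (gf : EuclideanSpace ℝ (Fin d) → EuclideanSpace ℝ (Fin d))
    (hdiff : ∀ x, HasGradientAt f (gf x) x)
    (hsc : ∀ x y, f x ≥ f y + ⟪gf y, x - y⟫ + μ / 2 * ‖x - y‖ ^ 2)
    (hsm : ∀ x y, f x ≤ f y + ⟪gf y, x - y⟫ + l / 2 * ‖x - y‖ ^ 2) :
    ∀ u x y : EuclideanSpace ℝ (Fin d),
      ⟪u - y, gf x - gf y⟫ ≥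
        -(l - μ / 2) * ‖u - x‖ ^ 2 + μ / 2 * (‖u - y‖ ^ 2 + ‖x - y‖ ^ 2) := by
  intro u x y
  have h1 := hsm u x
  have h2 := hsc y x
  have h3 := hsc u y
  have hnn : (0:ℝ) ≤ ‖u - x‖ ^ 2 := by positivity
  have key : ⟪u - y, gf x - gf y⟫ = ⟪gf x, u - x⟫ - ⟪gf x, y - x⟫ - ⟪gf y, u - y⟫ := by
    rw [real_inner_comm]
    simp [inner_sub_left, inner_sub_right]
    ring
  have hyx : ‖y - x‖ = ‖x - y‖ := norm_sub_rev y x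
  rw [key]
  rw [hyx] at h2
  rcases Nat.eq_zero_or_pos d with hd | hd
  · subst hd
    have hux : u - x = 0 := PiLp.ext fun i => Fin.elim0 i
    have huy : u - y = 0 := PiLp.ext fun i => Fin.elim0 i
    have hxy : x - y = 0 := PiLp.ext fun i => Fin.elim0 i
    have hgx : ∀ v w : EuclideanSpace ℝ (Fin 0), ⟪v, w⟫ = (0:ℝ) := fun v w => by
      simp [real_inner_comm, PiLp.inner_apply]
    simp [hux, huy, hxy, hgx]
  · have hml : μ ≤ l := by
      set e : EuclideanSpace ℝ (Fin d) := EuclideanSpace.single (⟨0, hd⟩ : Fin d) (1:ℝ)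
      have he : ‖e - 0‖ = 1 := by
        simp [e, EuclideanSpace.norm_single]
      have h4 := hsc e 0
      have h5 := hsm e 0
      rw [he] at h4 h5
      nlinarith
    nlinarith [mul_nonneg (sub_nonneg.mpr hml) hnn]

end
end
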